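/- Let P₀ be a finite poset with elements x₁,…,x_{m₀}, and for each i let Pᵢ be a finite poset with underlying set {x_{i,1},…,x_{i,mᵢ}}, these sets pairwise disjoint; give each Pᵢ the reference ordering x_{i,1} < … < x_{i,mᵢ}, and give the lexicographic sum P₀*(P₁,…,P_{m₀}) the reference ordering listing all x_{i,j} in lexicographic order of (i,j). Let P_{i,ch} be the chain x_{i,1} < … < x_{i,mᵢ} on |Pᵢ|. Then the sign-imbalances satisfy L₋(P₀*(P₁,…,P_{m₀})) = (∏_{1≤i≤m₀} L₋(Pᵢ)) · L₋(P₀*(P_{1,ch},…,P_{m₀,ch})), all sign-imbalances taken relative to the indicated reference orderings. -/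

import Mathlib

open scoped Classical

/-- Underlying set of the lexicographic sum over `Fin m₀` of chains `C i` of `m i` elements. -/
abbrev LexSumChains (m₀ : ℕ) (m : Fin m₀ → ℕ) : Type := Σ i : Fin m₀, Fin (m i)

/-- The order of the lexicographic sum `P₀ * (C₁, …, C_{m₀})` of chains over the poset
`(Fin m₀, r0)`: within a chain elements keep their order, and an element of `C i` is below an
element of `C i'` (for `i ≠ i'`) iff `xᵢ ≺₀ x_{i'}`. -/
def lexRel {m₀ : ℕ} (r0 : Fin m₀ → Fin m₀ → Prop) (m : Fin m₀ → ℕ)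
    (x y : LexSumChains m₀ m) : Prop :=
  (x.1 = y.1 ∧ (x.2 : ℕ) ≤ (y.2 : ℕ)) ∨ (x.1 ≠ y.1 ∧ r0 x.1 y.1)

/-- `φ` is (the isotone bijection corresponding to) a linearization of the lexicographic sum. -/
def IsLin {m₀ : ℕ} (r0 : Fin m₀ → Fin m₀ → Prop) (m : Fin m₀ → ℕ)
    (φ : LexSumChains m₀ m ≃ Fin (∑ i, m i)) : Prop :=
  ∀ x y, lexRel r0 m x y → φ x ≤ φ y

/-- `b` is the reference ordering, listing the elements `x_{i,j}` in lexicographic order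
of the pairs `(i,j)`. -/
def IsRef {m₀ : ℕ} (m : Fin m₀ → ℕ) (b : LexSumChains m₀ m ≃ Fin (∑ i, m i)) : Prop :=
  ∀ x y : LexSumChains m₀ m,
    (x.1 < y.1 ∨ (x.1 = y.1 ∧ (x.2 : ℕ) ≤ (y.2 : ℕ))) → b x ≤ b y

/-- `L₊(P₀; m₁, …, m_{m₀})`, the number of linearizations of the lexicographic sum of chains. -/
noncomputable def Lplus (m₀ : ℕ) (r0 : Fin m₀ → Fin m₀ → Prop) (m : Fin m₀ → ℕ) : ℕ :=
  Nat.card {φ : LexSumChains m₀ m ≃ Fin (∑ i, m i) // IsLin r0 m φ}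

/-- `L₋(P₀; m₁, …, m_{m₀})`, the sign-imbalance (number of even minus number of odd
linearizations) relative to the reference ordering `b`. -/
noncomputable def Lminus (m₀ : ℕ) (r0 : Fin m₀ → Fin m₀ → Prop) (m : Fin m₀ → ℕ)
    (b : LexSumChains m₀ m ≃ Fin (∑ i, m i)) : ℤ :=
  ∑ φ : LexSumChains m₀ m ≃ Fin (∑ i, m i),
    if IsLin r0 m φ then ((Equiv.Perm.sign (b.symm.trans φ)) : ℤ) else 0

/-- The underlying set of the lexicographic sum `P₀ * (P₁, …, P_{m₀})` of the posets `β i`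
over the poset `(Fin m₀, r0)`. -/
abbrev LexSum (m₀ : ℕ) (β : Fin m₀ → Type) : Type := Σ i : Fin m₀, β i

/-- The order of the lexicographic sum: two elements of the same `β i` are ordered as in `β i`,
and an element of `β i` is below an element of `β i'` (for `i ≠ i'`) iff `xᵢ ≺₀ x_{i'}`. -/
def lexRelGen {m₀ : ℕ} (r0 : Fin m₀ → Fin m₀ → Prop) (β : Fin m₀ → Type)
    [∀ i, PartialOrder (β i)] (x y : LexSum m₀ β) : Prop :=
  (∃ h : x.1 = y.1, cast (congrArg β h) x.2 ≤ y.2) ∨ (x.1 ≠ y.1 ∧ r0 x.1 y.1)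

/-- `φ` is (the isotone bijection corresponding to) a linearization of the lexicographic sum. -/
def IsLinGen {m₀ : ℕ} (r0 : Fin m₀ → Fin m₀ → Prop) (β : Fin m₀ → Type)
    [∀ i, PartialOrder (β i)] [∀ i, Fintype (β i)]
    (φ : LexSum m₀ β ≃ Fin (∑ i, Fintype.card (β i))) : Prop :=
  ∀ x y, lexRelGen r0 β x y → φ x ≤ φ y

/-- `B` is the reference ordering on the lexicographic sum `P₀ * (P₁, …, P_{m₀})`: it lists the
elements `x_{i,j}` (where `j` is the index given by the reference bijection `bfam i` of `Pᵢ`)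
in lexicographic order of the pairs `(i,j)`. -/
def IsRefGen {m₀ : ℕ} (β : Fin m₀ → Type) [∀ i, Fintype (β i)]
    (bfam : ∀ i, β i ≃ Fin (Fintype.card (β i)))
    (B : LexSum m₀ β ≃ Fin (∑ i, Fintype.card (β i))) : Prop :=
  ∀ x y : LexSum m₀ β,
    (x.1 < y.1 ∨ (x.1 = y.1 ∧ ((bfam x.1 x.2 : ℕ) ≤ (bfam y.1 y.2 : ℕ)))) → B x ≤ B y

/-- The sign-imbalance of a lexicographic sum `P₀ * (P₁, …, P_{m₀})`, relative
to the indicated reference ordering, is the product over `i` of the sign-imbalances of the `Pᵢ`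
(relative to their reference orderings `bfam i`), times the sign-imbalance of the lexicographic
sum over `P₀` of the chains `P_{i,ch}` (relative to its reference ordering). -/
/- Auxiliary lemmas -/

lemma monotone_equiv_fin_eq_refl {n : ℕ} (e : Fin n ≃ Fin n) (he : Monotone ⇑e) :
    e = Equiv.refl (Fin n) := by
  have hsm : StrictMono ⇑e := he.strictMono_of_injective e.injective
  let f : Fin n ≃o Fin n := ⟨e, fun {a b} => hsm.le_iff_le⟩
  have hf : f = OrderIso.refl (Fin n) := Subsingleton.elim _ _
  exact Equiv.ext fun x => congrArg (fun (g : Fin n ≃o Fin n) => g x) hf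

lemma sign_sigmaCongrRight_eq_prod {ι : Type} [Fintype ι] [DecidableEq ι] {κ : ι → Type}
    [∀ i, Fintype (κ i)] [∀ i, DecidableEq (κ i)] (σ : ∀ i, Equiv.Perm (κ i)) :
    Equiv.Perm.sign (Equiv.sigmaCongrRight σ) = ∏ i, Equiv.Perm.sign (σ i) := by
  classical
  have key : ∀ (i : ι) (τ : Equiv.Perm (κ i)),
      Equiv.Perm.sign (Equiv.sigmaCongrRight (Pi.mulSingle i τ)) = Equiv.Perm.sign τ := by
    intro i τ
    let f : κ i ≃ {x : Σ j, κ j // x.1 = i} :=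
      { toFun := fun a => ⟨⟨i, a⟩, rfl⟩
        invFun := fun x => cast (congrArg κ x.2) x.1.2
        left_inv := fun a => rfl
        right_inv := by rintro ⟨⟨j, a⟩, (h : j = i)⟩; subst h; rfl }
    have hext : Equiv.sigmaCongrRight (Pi.mulSingle i τ) = τ.extendDomain f := by
      apply Equiv.ext
      rintro ⟨k, a⟩
      by_cases h : k = i
      · subst h
        have h2 : Pi.mulSingle (M := fun j => Equiv.Perm (κ j)) k τ k = τ :=
          Pi.mulSingle_eq_same (M := fun j => Equiv.Perm (κ j)) k τ
        calc Equiv.sigmaCongrRight (Pi.mulSingle (M := fun j => Equiv.Perm (κ j)) k τ) ⟨k, a⟩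
            = ⟨k, (Pi.mulSingle (M := fun j => Equiv.Perm (κ j)) k τ k) a⟩ := rfl
          _ = ⟨k, τ a⟩ := by rw [h2]
          _ = ((f (τ a) : {x : Σ j, κ j // x.1 = k}) : Σ j, κ j) := rfl
          _ = τ.extendDomain f ((f a : Σ j, κ j)) :=
              (Equiv.Perm.extendDomain_apply_image τ f a).symm
          _ = τ.extendDomain f ⟨k, a⟩ := rfl
      · have h3 : Pi.mulSingle (M := fun j => Equiv.Perm (κ j)) i τ k = 1 :=
          Pi.mulSingle_eq_of_ne (M := fun j => Equiv.Perm (κ j)) h τ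
        calc Equiv.sigmaCongrRight (Pi.mulSingle (M := fun j => Equiv.Perm (κ j)) i τ) ⟨k, a⟩
            = ⟨k, (Pi.mulSingle (M := fun j => Equiv.Perm (κ j)) i τ k) a⟩ := rfl
          _ = ⟨k, a⟩ := by rw [h3]; rfl
          _ = τ.extendDomain f ⟨k, a⟩ :=
              (Equiv.Perm.extendDomain_apply_not_subtype τ f h).symm
    rw [hext, Equiv.Perm.sign_extendDomain]
  let F : (∀ i, Equiv.Perm (κ i)) →* ℤˣ :=
    Equiv.Perm.sign.comp (Equiv.Perm.sigmaCongrRightHom κ)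
  have h0 : Equiv.Perm.sign (Equiv.sigmaCongrRight σ) = F σ := rfl
  rw [h0]
  conv_lhs => rw [← Finset.noncommProd_mulSingle σ]
  refine (Finset.map_noncommProd _ _ _ F).trans ?_
  rw [Finset.noncommProd_eq_prod]
  exact Finset.prod_congr rfl fun i _ => key i (σ i)

theorem lexSum_signImbalance_eq_prod_mul (m₀ : ℕ)
    (r0 : Fin m₀ → Fin m₀ → Prop) (hr0 : IsPartialOrder (Fin m₀) r0)
    (β : Fin m₀ → Type) [∀ i, PartialOrder (β i)] [∀ i, Fintype (β i)]
    (bfam : ∀ i, β i ≃ Fin (Fintype.card (β i)))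
    (B : LexSum m₀ β ≃ Fin (∑ i, Fintype.card (β i))) (hB : IsRefGen β bfam B)
    (bc : LexSumChains m₀ (fun i => Fintype.card (β i)) ≃ Fin (∑ i, Fintype.card (β i)))
    (hbc : IsRef (fun i => Fintype.card (β i)) bc) :
    (∑ φ : LexSum m₀ β ≃ Fin (∑ i, Fintype.card (β i)),
        if IsLinGen r0 β φ then ((Equiv.Perm.sign (B.symm.trans φ)) : ℤ) else 0) =
      (∏ i : Fin m₀,
          ∑ ψ : β i ≃ Fin (Fintype.card (β i)),
            if Monotone ⇑ψ then ((Equiv.Perm.sign ((bfam i).symm.trans ψ)) : ℤ) else 0) *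
        Lminus m₀ r0 (fun i => Fintype.card (β i)) bc := by
  classical
  -- `B` agrees with the composite reference ordering
  have hBeq : B = (Equiv.sigmaCongrRight bfam).trans bc := by
    have hmono : Monotone ⇑(B.symm.trans ((Equiv.sigmaCongrRight bfam).trans bc)) := by
      intro k k' hk
      rcases eq_or_lt_of_le hk with rfl | hlt
      · exact le_refl _
      have hR : (B.symm k).1 < (B.symm k').1 ∨
          ((B.symm k).1 = (B.symm k').1 ∧
            ((bfam (B.symm k).1 (B.symm k).2 : ℕ) ≤ (bfam (B.symm k').1 (B.symm k').2 : ℕ))) := by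
        by_contra hcon
        push_neg at hcon
        obtain ⟨h1, h2⟩ := hcon
        have hR' : (B.symm k').1 < (B.symm k).1 ∨
            ((B.symm k').1 = (B.symm k).1 ∧
              ((bfam (B.symm k').1 (B.symm k').2 : ℕ) ≤ (bfam (B.symm k).1 (B.symm k).2 : ℕ))) := by
          rcases lt_or_eq_of_le h1 with h | h
          · exact Or.inl h
          · exact Or.inr ⟨h, le_of_lt (h2 h.symm)⟩
        have hle := hB (B.symm k') (B.symm k) hR'
        rw [Equiv.apply_symm_apply, Equiv.apply_symm_apply] at hle
        exact absurd hle (not_le_of_gt hlt)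
      exact hbc ⟨(B.symm k).1, bfam (B.symm k).1 (B.symm k).2⟩
        ⟨(B.symm k').1, bfam (B.symm k').1 (B.symm k').2⟩ hR
    have hrefl := monotone_equiv_fin_eq_refl _ hmono
    refine Equiv.ext fun z => ?_
    have h := congrArg (fun e => e (B z)) hrefl
    simpa using h.symm
  -- fiberwise strict monotonicity of linearizations of the chain sum
  have fiberStrict : ∀ (χ : LexSumChains m₀ (fun i => Fintype.card (β i)) ≃
        Fin (∑ i, Fintype.card (β i))),
      IsLin r0 (fun i => Fintype.card (β i)) χ → ∀ i : Fin m₀,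
      StrictMono (fun j : Fin (Fintype.card (β i)) => χ ⟨i, j⟩) := by
    intro χ hχ i
    have hmono : Monotone (fun j : Fin (Fintype.card (β i)) => χ ⟨i, j⟩) := fun j j' hj =>
      hχ ⟨i, j⟩ ⟨i, j'⟩ (Or.inl ⟨rfl, Fin.le_def.1 hj⟩)
    have hinj : Function.Injective (fun j : Fin (Fintype.card (β i)) => χ ⟨i, j⟩) := by
      intro a b h
      exact eq_of_heq (Sigma.mk.inj_iff.1 (χ.injective h)).2
    exact hmono.strictMono_of_injective hinj
  -- the linearization condition for composites
  have glin : ∀ (ψ : ∀ i, β i ≃ Fin (Fintype.card (β i)))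
      (χ : LexSumChains m₀ (fun i => Fintype.card (β i)) ≃ Fin (∑ i, Fintype.card (β i))),
      (∀ i, Monotone ⇑(ψ i)) → IsLin r0 (fun i => Fintype.card (β i)) χ →
      IsLinGen r0 β ((Equiv.sigmaCongrRight ψ).trans χ) := by
    intro ψ χ hψ hχ x y hxy
    rcases hxy with ⟨h, hle⟩ | ⟨hne, hr⟩
    · obtain ⟨i, a⟩ := x
      obtain ⟨i', b⟩ := y
      obtain rfl : i = i' := h
      have hab : a ≤ b := by simpa using hle
      exact hχ ⟨i, ψ i a⟩ ⟨i, ψ i b⟩ (Or.inl ⟨rfl, Fin.le_def.1 (hψ i hab)⟩)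
    · exact hχ _ _ (Or.inr ⟨hne, hr⟩)
  -- every linearization of the lexicographic sum factors
  have gsurj : ∀ φ : LexSum m₀ β ≃ Fin (∑ i, Fintype.card (β i)), IsLinGen r0 β φ →
      ∃ (ψ : ∀ i, β i ≃ Fin (Fintype.card (β i)))
        (χ : LexSumChains m₀ (fun i => Fintype.card (β i)) ≃ Fin (∑ i, Fintype.card (β i))),
        (∀ i, Monotone ⇑(ψ i)) ∧ IsLin r0 (fun i => Fintype.card (β i)) χ ∧
        φ = (Equiv.sigmaCongrRight ψ).trans χ := by
    intro φ hφ
    have hφfib : ∀ (i : Fin m₀) (x y : β i), x ≤ y → φ ⟨i, x⟩ ≤ φ ⟨i, y⟩ := by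
      intro i x y hxy
      exact hφ ⟨i, x⟩ ⟨i, y⟩ (Or.inl ⟨rfl, by simpa using hxy⟩)
    have hinj : ∀ i : Fin m₀, Function.Injective (fun x : β i => φ ⟨i, x⟩) := by
      intro i a b h
      exact eq_of_heq (Sigma.mk.inj_iff.1 (φ.injective h)).2
    set s : ∀ i : Fin m₀, Finset (Fin (∑ i, Fintype.card (β i))) :=
      fun i => Finset.univ.image (fun x : β i => φ ⟨i, x⟩) with hs
    have hscard : ∀ i, (s i).card = Fintype.card (β i) := fun i => by
      rw [hs, Finset.card_image_of_injective _ (hinj i), Finset.card_univ]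
    set oi : ∀ i, Fin (Fintype.card (β i)) ≃o (s i) :=
      fun i => (s i).orderIsoOfFin (hscard i) with hoi'
    have hbij : ∀ i, Function.Bijective
        (fun x : β i => (⟨φ ⟨i, x⟩, Finset.mem_image_of_mem _ (Finset.mem_univ x)⟩ : (s i))) := by
      intro i
      rw [Fintype.bijective_iff_injective_and_card]
      constructor
      · intro a b h
        exact hinj i (congrArg Subtype.val h)
      · rw [Fintype.card_coe, hscard i]
    set e : ∀ i, β i ≃ (s i) := fun i => Equiv.ofBijective _ (hbij i) with he
    set ψ : ∀ i, β i ≃ Fin (Fintype.card (β i)) :=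
      fun i => (e i).trans (oi i).toEquiv.symm with hψ'
    have hecoe : ∀ (i) (x : β i), ((e i x : (s i)) : Fin (∑ i, Fintype.card (β i))) = φ ⟨i, x⟩ :=
      fun i x => rfl
    have hoi : ∀ (i) (x : β i),
        (((oi i) ((ψ i) x) : (s i)) : Fin (∑ i, Fintype.card (β i))) = φ ⟨i, x⟩ := by
      intro i x
      have h1 : (oi i) ((ψ i) x) = e i x := by
        show (oi i).toEquiv ((oi i).toEquiv.symm (e i x)) = e i x
        exact Equiv.apply_symm_apply _ _
      rw [h1, hecoe]
    have hψmono : ∀ i, Monotone ⇑(ψ i) := by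
      intro i a b hab
      have h1 : φ ⟨i, a⟩ ≤ φ ⟨i, b⟩ := hφfib i a b hab
      have h2 : (oi i) ((ψ i) a) ≤ (oi i) ((ψ i) b) := by
        rw [← Subtype.coe_le_coe, hoi i a, hoi i b]
        exact h1
      exact (OrderIso.le_iff_le (oi i)).1 h2
    refine ⟨ψ, (Equiv.sigmaCongrRight ψ).symm.trans φ, hψmono, ?_, ?_⟩
    · rintro ⟨i, j⟩ ⟨i', j'⟩ hxy
      rcases hxy with ⟨h, hle⟩ | ⟨hne, hr⟩
      · obtain rfl : i = i' := h
        show φ ⟨i, (ψ i).symm j⟩ ≤ φ ⟨i, (ψ i).symm j'⟩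
        have key : ∀ j : Fin (Fintype.card (β i)),
            φ ⟨i, (ψ i).symm j⟩ = (((oi i) j : (s i)) : Fin (∑ i, Fintype.card (β i))) := by
          intro j
          rw [← hoi i ((ψ i).symm j), Equiv.apply_symm_apply]
        rw [key j, key j']
        exact Subtype.coe_le_coe.2 ((oi i).le_iff_le.2 (Fin.le_def.2 hle))
      · exact hφ _ _ (Or.inr ⟨hne, hr⟩)
    · exact Equiv.ext fun x => (congrArg φ (Equiv.symm_apply_apply _ x)).symm
  -- injectivity of the factorization
  have ginj : ∀ (ψ ψ' : ∀ i, β i ≃ Fin (Fintype.card (β i)))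
      (χ χ' : LexSumChains m₀ (fun i => Fintype.card (β i)) ≃ Fin (∑ i, Fintype.card (β i))),
      (∀ i, Monotone ⇑(ψ i)) → (∀ i, Monotone ⇑(ψ' i)) →
      IsLin r0 (fun i => Fintype.card (β i)) χ → IsLin r0 (fun i => Fintype.card (β i)) χ' →
      (Equiv.sigmaCongrRight ψ).trans χ = (Equiv.sigmaCongrRight ψ').trans χ' →
      ψ = ψ' ∧ χ = χ' := by
    intro ψ ψ' χ χ' hψ hψ' hχ hχ' heq
    have happ : ∀ (i : Fin m₀) (x : β i), χ ⟨i, ψ i x⟩ = χ' ⟨i, ψ' i x⟩ := fun i x =>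
      Equiv.ext_iff.1 heq ⟨i, x⟩
    have hψeq : ψ = ψ' := by
      funext i
      have hg : Monotone ⇑((ψ i).symm.trans (ψ' i)) := by
        intro j j' hj
        have e1 : ∀ j : Fin (Fintype.card (β i)),
            χ' ⟨i, ((ψ i).symm.trans (ψ' i)) j⟩ = χ ⟨i, j⟩ := by
          intro j
          have h := happ i ((ψ i).symm j)
          rw [Equiv.apply_symm_apply] at h
          exact h.symm
        have h1 : χ ⟨i, j⟩ ≤ χ ⟨i, j'⟩ := (fiberStrict χ hχ i).monotone hj
        rw [← e1 j, ← e1 j'] at h1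
        exact ((fiberStrict χ' hχ' i).le_iff_le).1 h1
      have hrefl := monotone_equiv_fin_eq_refl _ hg
      refine Equiv.ext fun x => ?_
      have h := congrArg (fun e => e ((ψ i) x)) hrefl
      simpa using h.symm
    subst hψeq
    refine ⟨rfl, ?_⟩
    refine Equiv.ext fun z => ?_
    have h := Equiv.ext_iff.1 heq ((Equiv.sigmaCongrRight ψ).symm z)
    simpa using h
  -- the sign identity
  have hsign : ∀ (ψ : ∀ i, β i ≃ Fin (Fintype.card (β i)))
      (χ : LexSumChains m₀ (fun i => Fintype.card (β i)) ≃ Fin (∑ i, Fintype.card (β i))),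
      ((Equiv.Perm.sign (B.symm.trans ((Equiv.sigmaCongrRight ψ).trans χ))) : ℤ) =
      (∏ i, ((Equiv.Perm.sign ((bfam i).symm.trans (ψ i))) : ℤ)) *
      ((Equiv.Perm.sign (bc.symm.trans χ)) : ℤ) := by
    intro ψ χ
    have hdec : B.symm.trans ((Equiv.sigmaCongrRight ψ).trans χ) =
        ((bc.symm.trans
            (Equiv.sigmaCongrRight fun i => (bfam i).symm.trans (ψ i))).trans bc).trans
          (bc.symm.trans χ) := by
      rw [hBeq]
      apply Equiv.ext
      intro x
      show χ ((Equiv.sigmaCongrRight ψ) ((Equiv.sigmaCongrRight bfam).symm (bc.symm x))) =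
        χ (bc.symm (bc ((Equiv.sigmaCongrRight fun i => (bfam i).symm.trans (ψ i)) (bc.symm x))))
      rw [Equiv.symm_apply_apply]
      generalize bc.symm x = z
      rcases z with ⟨i, j⟩
      rfl
    have hu : Equiv.Perm.sign (B.symm.trans ((Equiv.sigmaCongrRight ψ).trans χ)) =
        (∏ i, Equiv.Perm.sign ((bfam i).symm.trans (ψ i))) *
          Equiv.Perm.sign (bc.symm.trans χ) := by
      rw [hdec, Equiv.Perm.sign_trans, Equiv.Perm.sign_symm_trans_trans,
        sign_sigmaCongrRight_eq_prod, mul_comm]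
    have h := congrArg (Units.coeHom ℤ) hu
    simpa [map_mul, map_prod] using h
  -- rewrite both sides as sums over subtypes and conclude
  have hL : (∑ φ : LexSum m₀ β ≃ Fin (∑ i, Fintype.card (β i)),
        if IsLinGen r0 β φ then ((Equiv.Perm.sign (B.symm.trans φ)) : ℤ) else 0) =
      ∑ t : {φ : LexSum m₀ β ≃ Fin (∑ i, Fintype.card (β i)) // IsLinGen r0 β φ},
        ((Equiv.Perm.sign (B.symm.trans t.1)) : ℤ) := by
    rw [← Finset.sum_filter]
    exact Finset.sum_subtype _ (fun x => by simp) _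
  have hR1 : ∀ i : Fin m₀, (∑ ψ : β i ≃ Fin (Fintype.card (β i)),
        if Monotone ⇑ψ then ((Equiv.Perm.sign ((bfam i).symm.trans ψ)) : ℤ) else 0) =
      ∑ t : {ψ : β i ≃ Fin (Fintype.card (β i)) // Monotone ⇑ψ},
        ((Equiv.Perm.sign ((bfam i).symm.trans t.1)) : ℤ) := by
    intro i
    rw [← Finset.sum_filter]
    exact Finset.sum_subtype _ (fun x => by simp) _
  have hR2 : Lminus m₀ r0 (fun i => Fintype.card (β i)) bc =
      ∑ t : {χ : LexSumChains m₀ (fun i => Fintype.card (β i)) ≃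
          Fin (∑ i, Fintype.card (β i)) // IsLin r0 (fun i => Fintype.card (β i)) χ},
        ((Equiv.Perm.sign (bc.symm.trans t.1)) : ℤ) := by
    rw [Lminus, ← Finset.sum_filter]
    exact Finset.sum_subtype _ (fun x => by simp) _
  -- the bijection
  let D := (∀ i : Fin m₀, {ψ : β i ≃ Fin (Fintype.card (β i)) // Monotone ⇑ψ}) ×
    {χ : LexSumChains m₀ (fun i => Fintype.card (β i)) ≃ Fin (∑ i, Fintype.card (β i)) //
      IsLin r0 (fun i => Fintype.card (β i)) χ}
  let g : D → {φ : LexSum m₀ β ≃ Fin (∑ i, Fintype.card (β i)) // IsLinGen r0 β φ} :=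
    fun d => ⟨(Equiv.sigmaCongrRight fun i => (d.1 i).1).trans d.2.1,
      glin _ _ (fun i => (d.1 i).2) d.2.2⟩
  have hgbij : Function.Bijective g := by
    constructor
    · rintro ⟨p, c⟩ ⟨p', c'⟩ h
      have h' := Subtype.ext_iff.1 h
      obtain ⟨h1, h2⟩ := ginj _ _ _ _ (fun i => (p i).2) (fun i => (p' i).2) c.2 c'.2 h'
      refine Prod.ext ?_ (Subtype.ext h2)
      funext i
      exact Subtype.ext (congrFun h1 i)
    · rintro ⟨φ, hφ⟩
      obtain ⟨ψ, χ, hψ, hχ, hfact⟩ := gsurj φ hφ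
      exact ⟨⟨fun i => ⟨ψ i, hψ i⟩, ⟨χ, hχ⟩⟩, Subtype.ext hfact.symm⟩
  have hDsum : (∑ t : {φ : LexSum m₀ β ≃ Fin (∑ i, Fintype.card (β i)) // IsLinGen r0 β φ},
        ((Equiv.Perm.sign (B.symm.trans t.1)) : ℤ)) =
      ∑ d : D, ((Equiv.Perm.sign (B.symm.trans (g d).1)) : ℤ) :=
    (Fintype.sum_bijective g hgbij _ _ (fun d => rfl)).symm
  rw [hL, hDsum, hR2]
  conv_rhs => rw [Finset.prod_congr rfl (fun i _ => hR1 i)]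
  rw [Fintype.sum_prod_type]
  have hterm : ∀ d : D, ((Equiv.Perm.sign (B.symm.trans (g d).1)) : ℤ) =
      (∏ i, ((Equiv.Perm.sign ((bfam i).symm.trans (d.1 i).1)) : ℤ)) *
        ((Equiv.Perm.sign (bc.symm.trans d.2.1)) : ℤ) := fun d => hsign _ _
  calc (∑ p : ∀ i : Fin m₀, {ψ : β i ≃ Fin (Fintype.card (β i)) // Monotone ⇑ψ},
          ∑ c : {χ : LexSumChains m₀ (fun i => Fintype.card (β i)) ≃
              Fin (∑ i, Fintype.card (β i)) // IsLin r0 (fun i => Fintype.card (β i)) χ},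
          ((Equiv.Perm.sign (B.symm.trans (g (p, c)).1)) : ℤ))
      = ∑ p : ∀ i : Fin m₀, {ψ : β i ≃ Fin (Fintype.card (β i)) // Monotone ⇑ψ},
          ∑ c : {χ : LexSumChains m₀ (fun i => Fintype.card (β i)) ≃
              Fin (∑ i, Fintype.card (β i)) // IsLin r0 (fun i => Fintype.card (β i)) χ},
          (∏ i, ((Equiv.Perm.sign ((bfam i).symm.trans (p i).1)) : ℤ)) *
            ((Equiv.Perm.sign (bc.symm.trans c.1)) : ℤ) := by
        refine Finset.sum_congr rfl fun p _ => Finset.sum_congr rfl fun c _ => hterm (p, c)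
    _ = (∑ p : ∀ i : Fin m₀, {ψ : β i ≃ Fin (Fintype.card (β i)) // Monotone ⇑ψ},
          ∏ i, ((Equiv.Perm.sign ((bfam i).symm.trans (p i).1)) : ℤ)) *
        (∑ c : {χ : LexSumChains m₀ (fun i => Fintype.card (β i)) ≃
            Fin (∑ i, Fintype.card (β i)) // IsLin r0 (fun i => Fintype.card (β i)) χ},
          ((Equiv.Perm.sign (bc.symm.trans c.1)) : ℤ)) := by
        rw [Fintype.sum_mul_sum]
    _ = (∏ i : Fin m₀, ∑ t : {ψ : β i ≃ Fin (Fintype.card (β i)) // Monotone ⇑ψ},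
          ((Equiv.Perm.sign ((bfam i).symm.trans t.1)) : ℤ)) *
        (∑ c : {χ : LexSumChains m₀ (fun i => Fintype.card (β i)) ≃
            Fin (∑ i, Fintype.card (β i)) // IsLin r0 (fun i => Fintype.card (β i)) χ},
          ((Equiv.Perm.sign (bc.symm.trans c.1)) : ℤ)) := by
        rw [Fintype.prod_sum]
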